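/- Let $c_1\in(0,1]$, $c_2\geq 0$, $\alpha\colon[0,1]\to[c_1,1]$ differentiable with $|\dot\alpha(t)|\leq c_2/c_1$ for all $t$. Suppose $A^{(2)}\colon\mathbb{R}^2\to\mathbb{R}^{2\times 2}_{sym}$ satisfies $(A^{(2)}(y)\xi)\cdot\xi\geq(1-c_1^2/2)|\xi|^2$ for all $\xi$. For $|y_1|\leq\eta$ define the matrix $M(t,y)=D(t)A^{(2)}(y)D(t)-\big(\frac{1-\alpha(t)^2}{\alpha(t)^2}+y_1\frac{2\sqrt{1-\alpha(t)^2}\,\dot\alpha(t)}{\alpha(t)^3}+y_1^2\frac{\dot\alpha(t)^2}{\alpha(t)^4}\big)\,e_1\otimes e_1$, where $D(t)=\mathrm{diag}(1/\alpha(t),1)$. Then there exists $\eta_0>0$ depending only on $c_1,c_2$ such that for all $0<\eta\leq\eta_0$, all $t\in[0,1]$, all $|y_1|\leq\eta$, and all $\xi\in\mathbb{R}^2$: $(M(t,y)\xi)\cdot\xi\geq\min\{c_1^2/4,1/2\}\,|\xi|^2$. -/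

import Mathlib

set_option maxHeartbeats 1000000

open Real Matrix

theorem stmt12 (c1 c2 : ℝ) (hc1 : 0 < c1) (hc1' : c1 ≤ 1) (hc2 : 0 ≤ c2)
    (α α' : ℝ → ℝ)
    (hderiv : ∀ t ∈ Set.Icc (0:ℝ) 1, HasDerivAt α (α' t) t)
    (hrange : ∀ t ∈ Set.Icc (0:ℝ) 1, α t ∈ Set.Icc c1 1)
    (hα' : ∀ t ∈ Set.Icc (0:ℝ) 1, |α' t| ≤ c2 / c1)
    (A2 : ℝ × ℝ → Matrix (Fin 2) (Fin 2) ℝ)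
    (hsym : ∀ y, (A2 y).IsSymm)
    (hcoerc : ∀ y (ξ : Fin 2 → ℝ), (1 - c1^2/2) * (ξ 0^2 + ξ 1^2) ≤ ξ ⬝ᵥ (A2 y).mulVec ξ) :
    ∃ η0 > 0, ∀ η : ℝ, 0 < η → η ≤ η0 → ∀ t ∈ Set.Icc (0:ℝ) 1, ∀ y : ℝ × ℝ, |y.1| ≤ η →
      ∀ ξ : Fin 2 → ℝ,
        min (c1^2/4) (1/2) * (ξ 0^2 + ξ 1^2) ≤
          ξ ⬝ᵥ ((Matrix.diagonal ![1 / α t, 1] * A2 y * Matrix.diagonal ![1 / α t, 1]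
            - ((1 - (α t)^2) / (α t)^2
                + y.1 * (2 * Real.sqrt (1 - (α t)^2) * α' t) / (α t)^3
                + y.1^2 * ((α' t)^2 / (α t)^4)) • Matrix.diagonal ![1, 0]).mulVec ξ) := by
  refine ⟨c1^6 / (16 * (c2+1)^2), by positivity, ?_⟩
  intro η hη hηle t ht y hy ξ
  obtain ⟨hac1, ha1⟩ := hrange t ht
  set a := α t with ha_def
  set b := α' t with hb_def
  have hapos : 0 < a := lt_of_lt_of_le hc1 hac1
  have hb : |b| ≤ c2 / c1 := hα' t ht
  have hmin : min (c1^2/4) (1/2 : ℝ) = c1^2/4 := min_eq_left (by nlinarith)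
  rw [hmin]
  set s : ℝ := (1 - a^2) / a^2 + y.1 * (2 * Real.sqrt (1 - a^2) * b) / a^3
      + y.1^2 * (b^2 / a^4) with hs_def
  set B := A2 y with hB
  have hexp : ξ ⬝ᵥ ((Matrix.diagonal ![1 / a, 1] * B * Matrix.diagonal ![1 / a, 1]
      - s • Matrix.diagonal ![1, 0]).mulVec ξ)
      = (![ξ 0 / a, ξ 1]) ⬝ᵥ B.mulVec (![ξ 0 / a, ξ 1]) - s * ξ 0 ^ 2 := by
    simp [Matrix.sub_mulVec, Matrix.smul_mulVec, Matrix.mulVec, Matrix.mul_apply,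
      dotProduct, Fin.sum_univ_two, Matrix.diagonal_apply]
    ring
  rw [hexp]
  have hco := hcoerc y ![ξ 0 / a, ξ 1]
  simp only [Matrix.cons_val_zero, Matrix.cons_val_one, Matrix.head_cons, ← hB] at hco
  clear_value a b s B
  -- bound on the error term T
  have hS1 : Real.sqrt (1 - a^2) ≤ 1 := Real.sqrt_le_one.2 (by nlinarith)
  have hS0 : 0 ≤ Real.sqrt (1 - a^2) := Real.sqrt_nonneg _
  have hη0 : η ≤ c1^6 / (16 * (c2+1)^2) := hηle
  have hηb : η * (16 * (c2+1)^2) ≤ c1^6 := by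
    rwa [← le_div_iff₀ (by positivity)]
  have h1 : y.1 * (2 * Real.sqrt (1 - a^2) * b) / a^3 ≤ 2 * η * c2 / c1^4 := by
    calc y.1 * (2 * Real.sqrt (1 - a^2) * b) / a^3
        ≤ |y.1 * (2 * Real.sqrt (1 - a^2) * b) / a^3| := le_abs_self _
      _ = |y.1| * (2 * Real.sqrt (1 - a^2) * |b|) / a^3 := by
          rw [abs_div, abs_mul, abs_mul, abs_mul, abs_of_pos (by positivity : (0:ℝ) < a^3)]
          simp [abs_of_nonneg hS0]
      _ ≤ (η * (2 * 1 * (c2/c1))) / c1^3 := by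
          apply div_le_div₀ (by positivity) ?_ (by positivity) (pow_le_pow_left₀ hc1.le hac1 3)
          have hbnn : (0:ℝ) ≤ |b| := abs_nonneg _
          have hynn : (0:ℝ) ≤ |y.1| := abs_nonneg _
          have hc2c1 : 0 ≤ c2 / c1 := by positivity
          nlinarith [abs_nonneg y.1, mul_le_mul hy (mul_le_mul (by nlinarith : 2 * Real.sqrt (1-a^2) ≤ 2*1) hb hbnn (by norm_num)) (by positivity) hη.le]
      _ = 2 * η * c2 / c1^4 := by field_simp
  have h2 : y.1^2 * (b^2 / a^4) ≤ η^2 * c2^2 / c1^6 := by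
    have hb2 : b^2 ≤ (c2/c1)^2 := by
      rw [← sq_abs b]
      exact pow_le_pow_left₀ (abs_nonneg _) hb 2
    have hy2 : y.1^2 ≤ η^2 := by
      rw [← sq_abs y.1]
      exact pow_le_pow_left₀ (abs_nonneg _) hy 2
    have ha4 : c1^4 ≤ a^4 := pow_le_pow_left₀ hc1.le hac1 4
    calc y.1^2 * (b^2 / a^4) ≤ η^2 * ((c2/c1)^2 / c1^4) := by
          apply mul_le_mul hy2 ?_ (by positivity) (by positivity)
          exact div_le_div₀ (by positivity) hb2 (by positivity) ha4
      _ = η^2 * c2^2 / c1^6 := by ring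
  have herr : y.1 * (2 * Real.sqrt (1 - a^2) * b) / a^3 + y.1^2 * (b^2 / a^4) ≤ 1/4 := by
    have h46 : c1^6 ≤ c1^4 := pow_le_pow_of_le_one hc1.le hc1' (by norm_num)
    have h16 : η * (c2+1) ≤ c1^4/16 := by
      nlinarith [hηb, mul_le_mul_of_nonneg_left
        (show (c2+1) ≤ (c2+1)^2 by nlinarith) hη.le]
    have hec : η * c2 ≤ c1^4/16 := by nlinarith [h16, hη.le]
    have hA : 2 * η * c2 / c1^4 ≤ 1/8 := by
      rw [div_le_iff₀ (by positivity)]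
      nlinarith [hec, hη.le]
    have hBb : η^2 * c2^2 / c1^6 ≤ 1/8 := by
      rw [div_le_iff₀ (by positivity)]
      have h68 : c1^8 ≤ c1^6 := pow_le_pow_of_le_one hc1.le hc1' (by norm_num)
      nlinarith [mul_self_le_mul_self (mul_nonneg hη.le hc2) hec, h68]
    linarith
  -- coefficient inequality
  have hstep : (1:ℝ)/2 ≤ (a^2 - c1^2/2) / a^2 := by
    rw [le_div_iff₀ (by positivity)]
    nlinarith
  have hcoef : c1^2/4 + s ≤ (1 - c1^2/2) / a^2 := by
    have hsplit : (1 - c1^2/2) / a^2 = (1 - a^2)/a^2 + (a^2 - c1^2/2)/a^2 := by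
      rw [← add_div]; ring_nf
    rw [hsplit, hs_def]
    nlinarith
  -- finish
  have hkey : c1^2/4 * (ξ 0^2 + ξ 1^2) + s * ξ 0^2
      ≤ (1 - c1^2/2) * ((ξ 0 / a)^2 + ξ 1^2) := by
    have hdp : (ξ 0 / a)^2 = ξ 0^2 / a^2 := div_pow _ _ _
    have h01 : (c1^2/4 + s) * ξ 0^2 ≤ (1 - c1^2/2) / a^2 * ξ 0^2 :=
      mul_le_mul_of_nonneg_right hcoef (sq_nonneg _)
    have h02 : (1 - c1^2/2) / a^2 * ξ 0^2 = (1 - c1^2/2) * (ξ 0 / a)^2 := by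
      rw [hdp]; field_simp
    have h03 : c1^2/4 * ξ 1^2 ≤ (1 - c1^2/2) * ξ 1^2 :=
      mul_le_mul_of_nonneg_right (by nlinarith) (sq_nonneg _)
    calc c1^2/4 * (ξ 0^2 + ξ 1^2) + s * ξ 0^2
        = (c1^2/4 + s) * ξ 0^2 + c1^2/4 * ξ 1^2 := by ring
      _ ≤ (1 - c1^2/2) / a^2 * ξ 0^2 + (1 - c1^2/2) * ξ 1^2 := add_le_add h01 h03
      _ = (1 - c1^2/2) * ((ξ 0 / a)^2 + ξ 1^2) := by rw [h02]; ring
  rw [le_sub_iff_add_le]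
  exact le_trans hkey hco
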